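/- Every YES-instance (D,K,T) of MD-SPP has a solution path cover whose union contains at most 2^{|K|} + |K| distinct vertices. -/

import Mathlib

open Relation

variable {V : Type*} [DecidableEq V]

/-- The adjacency relation of a digraph given by its edge set. -/
def Adj (E : Finset (V × V)) : V → V → Prop := fun a b => (a, b) ∈ E

/-- `D` is a digraph: no self-loops (no parallel edges since edges form a set). -/
def IsDigraph (D : Finset (V × V)) : Prop := ∀ e ∈ D, e.1 ≠ e.2

/-- `l` is a directed `s`-`t`-path w.r.t. the adjacency relation `A`:
a nonempty duplicate-free list of vertices, consecutive ones adjacent,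
starting at `s` and ending at `t`. -/
def DiPath (A : V → V → Prop) (s t : V) (l : List V) : Prop :=
  l.Chain' A ∧ l.Nodup ∧ l.head? = some s ∧ l.getLast? = some t

/-- Adjacency in the transitive closure `T(D)` of the digraph with edge set `E`:
`(u,v)` is an edge iff `u ≠ v` and `v` is reachable from `u` in `E`. -/
def TCAdj (E : Finset (V × V)) (u v : V) : Prop :=
  u ≠ v ∧ Relation.ReflTransGen (Adj E) u v

/-- The outdegree of `v` in the digraph with edge set `H`. -/
def outDeg (H : Finset (V × V)) (v : V) : ℕ :=
  (H.filter fun e => e.1 = v).card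

/-- The list of (directed) edges traversed by a list of vertices. -/
def listEdges (l : List V) : List (V × V) := l.zip l.tail

/-- The routed commodities in `K` are valid: for `(s,t,P) ∈ K`,
`P` is a directed `s`-`t`-path in `D`. -/
def ValidSPP (D : Finset (V × V)) (K : Finset (V × V × List V)) : Prop :=
  ∀ k ∈ K, DiPath (Adj D) k.1 k.2.1 k.2.2

/-- `H` is a solution graph of the MD-SPP instance `(D,K,T)`: a subgraph of
`T(D)` of maximum outdegree at most `T` such that every routed commodity
`(s,t,P) ∈ K` has a directed `s`-`t`-path in `H ∩ T(P)`, i.e. an `s`-`t`-path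
whose edges are in `H` and whose vertices lie on `P` in the same order
(a sublist of `P`). -/
def SPPSolution (D : Finset (V × V)) (K : Finset (V × V × List V)) (T : ℕ)
    (H : Finset (V × V)) : Prop :=
  (∀ e ∈ H, TCAdj D e.1 e.2) ∧ (∀ v, outDeg H v ≤ T) ∧
  (∀ k ∈ K, ∃ l, DiPath (Adj H) k.1 k.2.1 l ∧ l.Sublist k.2.2)


section ListLemmas
set_option linter.unusedSectionVars false
set_option linter.unusedVariables false

@[simp] lemma listEdges_nil : listEdges ([] : List V) = [] := rfl
@[simp] lemma listEdges_single (a : V) : listEdges [a] = [] := rfl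
@[simp] lemma listEdges_cons₂ (a b : V) (l : List V) :
    listEdges (a :: b :: l) = (a, b) :: listEdges (b :: l) := rfl

lemma chain'_iff_forall_edges {R : V → V → Prop} : ∀ (l : List V),
    l.Chain' R ↔ ∀ e ∈ listEdges l, R e.1 e.2
  | [] => by simp [List.Chain']
  | [a] => by simp [List.Chain']
  | a :: b :: l => by
      rw [(show List.Chain' R (a :: b :: l) ↔ R a b ∧ List.Chain' R (b :: l) from List.isChain_cons_cons), listEdges_cons₂, chain'_iff_forall_edges (b :: l)]
      constructor
      · rintro ⟨h1, h2⟩ e he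
        rcases List.mem_cons.1 he with rfl | he
        · exact h1
        · exact h2 e he
      · intro h
        exact ⟨h (a, b) (List.mem_cons_self),
          fun e he => h e (List.mem_cons_of_mem _ he)⟩

lemma sublist_of_mem_listEdges : ∀ {l : List V} {e : V × V},
    e ∈ listEdges l → [e.1, e.2].Sublist l
  | [], e, h => by simp at h
  | [a], e, h => by simp at h
  | a :: b :: l, e, h => by
      rw [listEdges_cons₂, List.mem_cons] at h
      rcases h with rfl | h
      · exact (List.nil_sublist l).cons₂ b |>.cons₂ a
      · exact (sublist_of_mem_listEdges h).cons a

lemma snd_mem_of_mem_listEdges_cons : ∀ {l : List V} {c : V} {e : V × V},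
    e ∈ listEdges (c :: l) → e.2 ∈ l
  | [], c, e, h => by simp at h
  | d :: l, c, e, h => by
      rw [listEdges_cons₂, List.mem_cons] at h
      rcases h with rfl | h
      · exact List.mem_cons_self
      · exact List.mem_cons_of_mem _ (snd_mem_of_mem_listEdges_cons h)

lemma mem_listEdges_cons (c : V) {M : List V} {e : V × V} (h : e ∈ listEdges M) :
    e ∈ listEdges (c :: M) := by
  cases M with
  | nil => simp at h
  | cons d M' => rw [listEdges_cons₂]; exact List.mem_cons_of_mem _ h

lemma mem_listEdges_append_right : ∀ (A : List V) {B : List V} {e : V × V},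
    e ∈ listEdges B → e ∈ listEdges (A ++ B)
  | [], B, e, h => h
  | a :: A', B, e, h => mem_listEdges_cons a (mem_listEdges_append_right A' h)

lemma mem_listEdges_append_left : ∀ {A : List V} (B : List V) {e : V × V},
    e ∈ listEdges A → e ∈ listEdges (A ++ B)
  | [], _, _, h => by simp at h
  | [a], _, _, h => by simp at h
  | a :: b :: A', B, e, h => by
      rw [listEdges_cons₂, List.mem_cons] at h
      rw [List.cons_append, List.cons_append, listEdges_cons₂]
      rcases h with rfl | h
      · exact List.mem_cons_self
      · exact List.mem_cons_of_mem _ (mem_listEdges_append_left (A := b :: A') B h)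

lemma mem_listEdges_append_cons : ∀ {W : List V} {c : V} {R : List V} {e : V × V},
    e ∈ listEdges (W ++ c :: R) → e ∈ listEdges (W ++ [c]) ∨ e ∈ listEdges (c :: R)
  | [], c, R, e, h => Or.inr h
  | [a], c, R, e, h => by
      rw [List.singleton_append, listEdges_cons₂, List.mem_cons] at h
      rcases h with rfl | h
      · exact Or.inl (by simp)
      · exact Or.inr h
  | a :: b :: W', c, R, e, h => by
      rw [List.cons_append, List.cons_append, listEdges_cons₂, List.mem_cons] at h
      rcases h with rfl | h
      · refine Or.inl ?_
        show (a, b) ∈ listEdges (a :: b :: (W' ++ [c]))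
        rw [listEdges_cons₂]
        exact List.mem_cons_self
      · rcases mem_listEdges_append_cons (W := b :: W') (e := e) h with h' | h'
        · refine Or.inl ?_
          show e ∈ listEdges (a :: ((b :: W') ++ [c]))
          exact mem_listEdges_cons a h'
        · exact Or.inr h'

lemma pair_mem_listEdges (W : List V) (p e : V) (R : List V) :
    (p, e) ∈ listEdges (W ++ p :: e :: R) :=
  mem_listEdges_append_right W (by rw [listEdges_cons₂]; exact List.mem_cons_self)

lemma rtg_of_chain'_mem {R : V → V → Prop} : ∀ {l : List V} {c b : V},
    (c :: l).Chain' R → b ∈ l → Relation.ReflTransGen R c b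
  | [], c, b, _, hb => by simp at hb
  | d :: l', c, b, h, hb => by
      rw [(show List.Chain' R (c :: d :: l') ↔ R c d ∧ List.Chain' R (d :: l') from List.isChain_cons_cons)] at h
      rcases List.mem_cons.1 hb with rfl | hb
      · exact Relation.ReflTransGen.single h.1
      · exact (Relation.ReflTransGen.single h.1).trans (rtg_of_chain'_mem h.2 hb)

lemma rtg_of_chain'_sublist {R : V → V → Prop} {a b : V} : ∀ {l : List V},
    l.Chain' R → [a, b].Sublist l → Relation.ReflTransGen R a b := by
  intro l
  induction l with
  | nil => intro _ h; simp at h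
  | cons c l' ih =>
      intro hc hs
      cases hs with
      | cons _ h => exact ih hc.tail h
      | cons_cons _ h => exact rtg_of_chain'_mem hc (h.subset (List.mem_cons_self))

lemma getLast?_append_cons : ∀ (A : List V) (c : V) (R : List V),
    (A ++ c :: R).getLast? = (c :: R).getLast?
  | [], c, R => rfl
  | [a], c, R => by rw [List.singleton_append, List.getLast?_cons_cons]
  | a :: a' :: A', c, R => by
      show (a :: a' :: (A' ++ c :: R)).getLast? = _
      rw [List.getLast?_cons_cons]
      exact getLast?_append_cons (a' :: A') c R

lemma head?_append_cons (A : List V) (c : V) (R S : List V) :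
    (A ++ c :: R).head? = (A ++ c :: S).head? := by cases A <;> simp

end ListLemmas

section FeasFramework

variable {V : Type*} [DecidableEq V]

/-- The union digraph of a family of candidate witness paths. -/
def FamEdges (K : Finset (V × V × List V)) (Q : V × V × List V → List V) :
    Finset (V × V) :=
  K.biUnion fun k => (listEdges (Q k)).toFinset

/-- Feasibility of a family of candidate witness paths. -/
def Feas (K : Finset (V × V × List V)) (T : ℕ) (Q : V × V × List V → List V) : Prop :=
  (∀ k ∈ K, (Q k).Sublist k.2.2 ∧ (Q k).head? = some k.1 ∧
    (Q k).getLast? = some k.2.1) ∧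
  ∀ w, outDeg (FamEdges K Q) w ≤ T

lemma outDeg_mono {H H' : Finset (V × V)} (h : H ⊆ H') (v : V) :
    outDeg H v ≤ outDeg H' v :=
  Finset.card_le_card (Finset.filter_subset_filter _ h)

lemma feas_exists {D : Finset (V × V)} {K : Finset (V × V × List V)} {T : ℕ}
    {H : Finset (V × V)} (hH : SPPSolution D K T H) : ∃ Q, Feas K T Q := by
  classical
  obtain ⟨hTC, hdeg, hpaths⟩ := hH
  choose l hl1 hl2 using hpaths
  refine ⟨fun k => if h : k ∈ K then l k h else [], ?_, ?_⟩
  · intro k hk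
    simp only [dif_pos hk]
    obtain ⟨hchain, hnd, hh, hg⟩ := hl1 k hk
    exact ⟨hl2 k hk, hh, hg⟩
  · intro w
    refine le_trans (outDeg_mono ?_ w) (hdeg w)
    intro e he
    simp only [FamEdges, Finset.mem_biUnion, List.mem_toFinset] at he
    obtain ⟨k, hk, he⟩ := he
    rw [dif_pos hk] at he
    have h2 := (chain'_iff_forall_edges _).1 (hl1 k hk).1 e he
    simpa [Adj] using h2

lemma feas_spp {D : Finset (V × V)} {K : Finset (V × V × List V)} {T : ℕ}
    {Q : V × V × List V → List V} (hKvalid : ValidSPP D K) (hQ : Feas K T Q) :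
    SPPSolution D K T (FamEdges K Q) := by
  obtain ⟨hpath, hdeg⟩ := hQ
  refine ⟨?_, hdeg, ?_⟩
  · intro e he
    simp only [FamEdges, Finset.mem_biUnion, List.mem_toFinset] at he
    obtain ⟨k, hk, he⟩ := he
    obtain ⟨hsub, hh, hg⟩ := hpath k hk
    obtain ⟨hchainP, hndP, _, _⟩ := hKvalid k hk
    have hsubp : [e.1, e.2].Sublist k.2.2 := (sublist_of_mem_listEdges he).trans hsub
    refine ⟨?_, rtg_of_chain'_sublist hchainP hsubp⟩
    have hnd2 : [e.1, e.2].Nodup := hsubp.nodup hndP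
    simpa using hnd2
  · intro k hk
    obtain ⟨hsub, hh, hg⟩ := hpath k hk
    obtain ⟨_, hndP, _, _⟩ := hKvalid k hk
    refine ⟨Q k, ⟨?_, hsub.nodup hndP, hh, hg⟩, hsub⟩
    rw [chain'_iff_forall_edges]
    intro e he
    show (e.1, e.2) ∈ FamEdges K Q
    simp only [FamEdges, Finset.mem_biUnion, List.mem_toFinset]
    exact ⟨k, hk, by simpa using he⟩

end FeasFramework


section Surgery

variable {V : Type*} [DecidableEq V]

/-- Decomposition of a path containing two distinguished non-initial vertices. -/
lemma exists_decomp {l : List V} {u v s : V} (hu : u ∈ l) (hv : v ∈ l) (huv : u ≠ v)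
    (hh : l.head? = some s) (hus : u ≠ s) (hvs : v ≠ s) :
    ∃ W p e Y f Z, l = W ++ p :: e :: (Y ++ f :: Z) ∧
      ((e = u ∧ f = v) ∨ (e = v ∧ f = u)) := by
  -- first split into X ++ e :: (Y ++ f :: Z)
  obtain ⟨A, B, hAB⟩ := List.append_of_mem hu
  have hv' : v ∈ A ∨ v ∈ B := by
    rw [hAB] at hv
    rcases List.mem_append.1 hv with h | h
    · exact Or.inl h
    · rcases List.mem_cons.1 h with h | h
      · exact absurd h.symm huv
      · exact Or.inr h
  have main : ∃ X e Y f Z, l = X ++ e :: (Y ++ f :: Z) ∧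
      ((e = u ∧ f = v) ∨ (e = v ∧ f = u)) := by
    rcases hv' with h | h
    · obtain ⟨X, Y, hXY⟩ := List.append_of_mem h
      exact ⟨X, v, Y, u, B, by rw [hAB, hXY]; simp, Or.inr ⟨rfl, rfl⟩⟩
    · obtain ⟨Y, Z, hYZ⟩ := List.append_of_mem h
      exact ⟨A, u, Y, v, Z, by rw [hAB, hYZ], Or.inl ⟨rfl, rfl⟩⟩
  obtain ⟨X, e, Y, f, Z, hl, hef⟩ := main
  have hX : X ≠ [] := by
    rintro rfl
    rw [hl] at hh
    have hes : e = s := by simpa using hh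
    rcases hef with ⟨rfl, _⟩ | ⟨rfl, _⟩
    · exact hus hes
    · exact hvs hes
  obtain ⟨W, p, rfl⟩ : ∃ W p, X = W ++ [p] := by
    rcases List.eq_nil_or_concat X with h | ⟨W, p, h⟩
    · exact absurd h hX
    · exact ⟨W, p, by rw [h, List.concat_eq_append]⟩
  exact ⟨W, p, e, Y, f, Z, by rw [hl]; simp, hef⟩

/-- The exchange argument: two distinct non-source vertices of the same type allow
a strictly shorter feasible family. -/
lemma surgery {K : Finset (V × V × List V)} {T : ℕ} {Q : V × V × List V → List V}
    (hQ : Feas K T Q) (hNodup : ∀ k ∈ K, (Q k).Nodup)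
    {u v : V} (huv : u ≠ v)
    (hu : ∃ k ∈ K, u ∈ Q k)
    (hheadu : ∀ k ∈ K, u ≠ k.1) (hheadv : ∀ k ∈ K, v ≠ k.1)
    (htyp : ∀ k ∈ K, (u ∈ Q k ↔ v ∈ Q k)) :
    ∃ Q', Feas K T Q' ∧ ∑ k ∈ K, (Q' k).length < ∑ k ∈ K, (Q k).length := by
  classical
  obtain ⟨hpath, hdeg⟩ := hQ
  have hdec : ∀ k, k ∈ K ∧ u ∈ Q k → ∃ W p e Y f Z,
      Q k = W ++ p :: e :: (Y ++ f :: Z) ∧ ((e = u ∧ f = v) ∨ (e = v ∧ f = u)) := by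
    rintro k ⟨hk, hku⟩
    exact exists_decomp hku ((htyp k hk).1 hku) huv (hpath k hk).2.1
      (hheadu k hk) (hheadv k hk)
  choose W p e Y f Z hQk hef using hdec
  set Q' : V × V × List V → List V := fun k =>
    if h : k ∈ K ∧ u ∈ Q k then W k h ++ p k h :: f k h :: Z k h else Q k with hQ'def
  -- non-membership facts
  have hnm : ∀ k (h : k ∈ K ∧ u ∈ Q k),
      (u ∉ W k h ++ [p k h]) ∧ (v ∉ W k h ++ [p k h]) ∧ (u ∉ Z k h) ∧ (v ∉ Z k h) := by
    rintro k h
    have hnd := hNodup k h.1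
    rw [hQk k h] at hnd
    have h1 : (W k h ++ [p k h]) ++ (e k h :: (Y k h ++ f k h :: Z k h)) =
        W k h ++ p k h :: e k h :: (Y k h ++ f k h :: Z k h) := by simp
    rw [← h1, List.nodup_append] at hnd
    obtain ⟨-, hnd2, hdisj⟩ := hnd
    have he1 : e k h ∉ W k h ++ [p k h] := fun hc => hdisj _ hc _ List.mem_cons_self rfl
    have hf1 : f k h ∉ W k h ++ [p k h] := fun hc => hdisj _ hc _
      (List.mem_cons_of_mem _ (List.mem_append_right _ List.mem_cons_self)) rfl
    rw [List.nodup_cons, List.nodup_append, List.nodup_cons] at hnd2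
    have he2 : e k h ∉ Z k h := fun hc => hnd2.1
      (List.mem_append_right _ (List.mem_cons_of_mem _ hc))
    have hf2 : f k h ∉ Z k h := hnd2.2.2.1.1
    rcases hef k h with ⟨hE, hF⟩ | ⟨hE, hF⟩
    · exact ⟨hE ▸ he1, hF ▸ hf1, hE ▸ he2, hF ▸ hf2⟩
    · exact ⟨hF ▸ hf1, hE ▸ he1, hF ▸ hf2, hE ▸ he2⟩
  have hnotin : ∀ k, k ∈ K → u ∉ Q k → (u ∉ Q k ∧ v ∉ Q k) := by
    intro k hk hku
    exact ⟨hku, fun hc => hku ((htyp k hk).2 hc)⟩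
  -- the master edge classification for the new union
  have hmaster : ∀ x ∈ FamEdges K Q', (x ∈ FamEdges K Q ∧ x.2 ≠ u ∧ x.2 ≠ v) ∨
      (∃ (k : V × V × List V) (h : k ∈ K ∧ u ∈ Q k), x = (p k h, f k h)) := by
    intro x hx
    simp only [FamEdges, Finset.mem_biUnion, List.mem_toFinset] at hx
    obtain ⟨k, hk, hx⟩ := hx
    by_cases hku : u ∈ Q k
    · have h : k ∈ K ∧ u ∈ Q k := ⟨hk, hku⟩
      rw [hQ'def] at hx
      simp only [dif_pos h] at hx
      rcases mem_listEdges_append_cons hx with h1 | h1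
      · -- edge within the prefix W ++ [p]
        refine Or.inl ⟨?_, ?_, ?_⟩
        · simp only [FamEdges, Finset.mem_biUnion, List.mem_toFinset]
          refine ⟨k, hk, ?_⟩
          rw [hQk k h]
          have : x ∈ listEdges ((W k h ++ [p k h]) ++ (e k h :: (Y k h ++ f k h :: Z k h))) :=
            mem_listEdges_append_left _ h1
          simpa using this
        · intro hc
          exact (hnm k h).1 (by rw [← hc]
                                exact (sublist_of_mem_listEdges h1).subset
                                  (List.mem_cons_of_mem _ (List.mem_cons_self)))
        · intro hc
          exact (hnm k h).2.1 (by rw [← hc]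
                                  exact (sublist_of_mem_listEdges h1).subset
                                    (List.mem_cons_of_mem _ (List.mem_cons_self)))
      · rw [listEdges_cons₂, List.mem_cons] at h1
        rcases h1 with rfl | h1
        · exact Or.inr ⟨k, h, rfl⟩
        · -- edge within the suffix f :: Z
          have hx2 : x.2 ∈ Z k h := snd_mem_of_mem_listEdges_cons h1
          refine Or.inl ⟨?_, fun hc => (hnm k h).2.2.1 (hc ▸ hx2),
            fun hc => (hnm k h).2.2.2 (hc ▸ hx2)⟩
          simp only [FamEdges, Finset.mem_biUnion, List.mem_toFinset]
          refine ⟨k, hk, ?_⟩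
          rw [hQk k h]
          have h2 : (W k h ++ p k h :: e k h :: Y k h) ++ (f k h :: Z k h) =
              W k h ++ p k h :: e k h :: (Y k h ++ f k h :: Z k h) := by simp
          rw [← h2]
          exact mem_listEdges_append_right _ h1
    · have hQ'k : Q' k = Q k := by rw [hQ'def]; simp [hku]
      rw [hQ'k] at hx
      have hmem : x.2 ∈ Q k :=
        (sublist_of_mem_listEdges hx).subset (List.mem_cons_of_mem _ (List.mem_cons_self))
      refine Or.inl ⟨?_, fun hc => (hnotin k hk hku).1 (hc ▸ hmem),
        fun hc => (hnotin k hk hku).2 (hc ▸ hmem)⟩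
      simp only [FamEdges, Finset.mem_biUnion, List.mem_toFinset]
      exact ⟨k, hk, hx⟩
  refine ⟨Q', ⟨?_, ?_⟩, ?_⟩
  · -- path conditions
    intro k hk
    by_cases hku : u ∈ Q k
    · have h : k ∈ K ∧ u ∈ Q k := ⟨hk, hku⟩
      have hQ'k : Q' k = W k h ++ p k h :: f k h :: Z k h := by
        rw [hQ'def]; simp [h]
      obtain ⟨hsub, hh, hg⟩ := hpath k hk
      refine ⟨?_, ?_, ?_⟩
      · rw [hQ'k]
        have hs1 : (W k h ++ p k h :: f k h :: Z k h).Sublist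
            (W k h ++ p k h :: e k h :: (Y k h ++ f k h :: Z k h)) := by
          refine List.Sublist.append_left ?_ _
          refine List.Sublist.cons₂ _ ?_
          exact (List.sublist_append_right (Y k h) (f k h :: Z k h)).cons (e k h)
        exact hs1.trans (hQk k h ▸ hsub)
      · rw [hQ'k, ← hh, hQk k h]
        exact head?_append_cons _ _ _ _
      · rw [hQ'k, ← hg, hQk k h]
        have h2 : (W k h ++ p k h :: e k h :: Y k h) ++ (f k h :: Z k h) =
            W k h ++ p k h :: e k h :: (Y k h ++ f k h :: Z k h) := by simp
        have h3 : (W k h ++ [p k h]) ++ (f k h :: Z k h) =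
            W k h ++ p k h :: f k h :: Z k h := by simp
        rw [← h2, ← h3, getLast?_append_cons, getLast?_append_cons]
    · have hQ'k : Q' k = Q k := by rw [hQ'def]; simp [hku]
      rw [hQ'k]
      exact hpath k hk
  · -- outdegree
    intro w
    set sw : V → V := fun y => if y = u then v else if y = v then u else y with hswdef
    have hswinj : Function.Injective sw := by
      have hinv : ∀ y, sw (sw y) = y := by
        intro y
        rw [hswdef]
        by_cases h1 : y = u
        · simp [h1, huv.symm]
        · by_cases h2 : y = v
          · simp [h1, h2, huv]
          · simp [h1, h2]
      intro a b hab
      rw [← hinv a, hab, hinv b]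
    refine le_trans (Finset.card_le_card_of_injOn (fun x => (x.1, sw x.2)) ?_ ?_) (hdeg w)
    · intro x hx
      rw [Finset.mem_coe, Finset.mem_filter] at hx
      obtain ⟨hx, hxw⟩ := hx
      show (x.1, sw x.2) ∈ Finset.filter (fun e => e.1 = w) (FamEdges K Q)
      rw [Finset.mem_filter]
      rcases hmaster x hx with ⟨hold, hx2u, hx2v⟩ | ⟨k, h, rfl⟩
      · refine ⟨?_, hxw⟩
        have : sw x.2 = x.2 := by rw [hswdef]; simp [hx2u, hx2v]
        rw [this]
        simpa using hold
      · refine ⟨?_, hxw⟩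
        have hswf : sw (f k h) = e k h := by
          rcases hef k h with ⟨hE, hF⟩ | ⟨hE, hF⟩
          · rw [hswdef, hF, hE]; simp [huv.symm]
          · rw [hswdef, hF, hE]; simp
        simp only [hswf]
        simp only [FamEdges, Finset.mem_biUnion, List.mem_toFinset]
        refine ⟨k, h.1, ?_⟩
        rw [hQk k h]
        exact pair_mem_listEdges _ _ _ _
    · intro a _ b _ hab
      simp only [Prod.mk.injEq] at hab
      exact Prod.ext hab.1 (hswinj hab.2)
  · -- strict length decrease
    obtain ⟨k₀, hk₀, hk₀u⟩ := hu
    refine Finset.sum_lt_sum ?_ ⟨k₀, hk₀, ?_⟩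
    · intro k hk
      by_cases hku : u ∈ Q k
      · have h : k ∈ K ∧ u ∈ Q k := ⟨hk, hku⟩
        have hQ'k : Q' k = W k h ++ p k h :: f k h :: Z k h := by rw [hQ'def]; simp [h]
        rw [hQ'k, hQk k h]
        simp
        omega
      · have hQ'k : Q' k = Q k := by rw [hQ'def]; simp [hku]
        rw [hQ'k]
    · have h : k₀ ∈ K ∧ u ∈ Q k₀ := ⟨hk₀, hk₀u⟩
      have hQ'k : Q' k₀ = W k₀ h ++ p k₀ h :: f k₀ h :: Z k₀ h := by rw [hQ'def]; simp [h]
      rw [hQ'k, hQk k₀ h]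
      simp

end Surgery


/-- Every YES-instance `(D,K,T)` of MD-SPP has a solution path
cover (a family `Q` of witness paths, one per routed commodity `(s,t,P)`:
a directed `s`-`t`-path in `T(P)`, i.e. a sublist of `P` from `s` to `t`, whose
union is a solution graph) whose union contains at most `2^|K| + |K|` distinct
vertices. -/
theorem mdspp_small_solution_path_cover {V : Type*} [Fintype V] [DecidableEq V]
    (D : Finset (V × V)) (K : Finset (V × V × List V)) (T : ℕ)
    (hD : IsDigraph D) (hKvalid : ValidSPP D K)
    (hyes : ∃ H : Finset (V × V), SPPSolution D K T H) :
    ∃ Q : V × V × List V → List V,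
      (∀ k ∈ K, (Q k).Sublist k.2.2 ∧ (Q k).head? = some k.1 ∧
        (Q k).getLast? = some k.2.1) ∧
      SPPSolution D K T (K.biUnion fun k => (listEdges (Q k)).toFinset) ∧
      (K.biUnion fun k => (Q k).toFinset).card ≤ 2 ^ K.card + K.card := by
  classical
  obtain ⟨H, hH⟩ := hyes
  obtain ⟨Q₀, hQ₀⟩ := feas_exists hH
  have hPex : ∃ n, ∃ Q : V × V × List V → List V,
      Feas K T Q ∧ ∑ k ∈ K, (Q k).length = n := ⟨_, Q₀, hQ₀, rfl⟩
  have hdecP : DecidablePred fun n => ∃ Q : V × V × List V → List V,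
      Feas K T Q ∧ ∑ k ∈ K, (Q k).length = n := fun _ => Classical.dec _
  obtain ⟨Q, hQ, hQsum⟩ := Nat.find_spec hPex
  have hnodup : ∀ k ∈ K, (Q k).Nodup := fun k hk =>
    ((hQ.1 k hk).1).nodup (hKvalid k hk).2.1
  refine ⟨Q, fun k hk => hQ.1 k hk, feas_spp hKvalid hQ, ?_⟩
  have h1 : (K.biUnion fun k => (Q k).toFinset).card ≤
      ((K.biUnion fun k => (Q k).toFinset) \ K.image (fun k => k.1)).card +
      (K.image fun k => k.1).card := Finset.card_le_card_sdiff_add_card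
  have h2 : (K.image fun k => k.1).card ≤ K.card := Finset.card_image_le
  have h3 : ((K.biUnion fun k => (Q k).toFinset) \ K.image (fun k => k.1)).card ≤
      2 ^ K.card := by
    rw [← Finset.card_powerset]
    refine Finset.card_le_card_of_injOn (fun x => K.filter fun k => x ∈ Q k) ?_ ?_
    · intro x _
      exact Finset.mem_powerset.2 (Finset.filter_subset _ _)
    · intro x hx y hy hxy
      by_contra hne
      rw [Finset.mem_coe, Finset.mem_sdiff] at hx hy
      have hxU : ∃ k ∈ K, x ∈ Q k := by
        simpa [Finset.mem_biUnion, List.mem_toFinset] using hx.1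
      have hheadx : ∀ k ∈ K, x ≠ k.1 := by
        intro k hk hc
        exact hx.2 (Finset.mem_image.2 ⟨k, hk, hc.symm⟩)
      have hheady : ∀ k ∈ K, y ≠ k.1 := by
        intro k hk hc
        exact hy.2 (Finset.mem_image.2 ⟨k, hk, hc.symm⟩)
      have hxy' : (K.filter fun k => x ∈ Q k) = K.filter fun k => y ∈ Q k := hxy
      have htypxy : ∀ k ∈ K, (x ∈ Q k ↔ y ∈ Q k) := by
        intro k hk
        constructor
        · intro hxk
          have hmem : k ∈ K.filter fun k => x ∈ Q k := Finset.mem_filter.2 ⟨hk, hxk⟩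
          rw [hxy'] at hmem
          exact (Finset.mem_filter.1 hmem).2
        · intro hyk
          have hmem : k ∈ K.filter fun k => y ∈ Q k := Finset.mem_filter.2 ⟨hk, hyk⟩
          rw [← hxy'] at hmem
          exact (Finset.mem_filter.1 hmem).2
      obtain ⟨Q', hQ', hlt⟩ := surgery hQ hnodup hne hxU hheadx hheady htypxy
      rw [hQsum] at hlt
      exact Nat.find_min hPex hlt ⟨Q', hQ', rfl⟩
  omega
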